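/- Let A be an abelian group, B ⊆ A a subgroup such that B is divisible and the quotient A/B is a free abelian group, and let ℓ be a prime. Then the kernel of the canonical map from A to the inverse limit over e of A/ℓ^e·A equals B. -/

import Mathlib

/-- In ℤ, if `n` is divisible by `ℓ^e` for all `e`, with `ℓ` prime, then `n = 0`. -/
lemma int_eq_zero_of_pow_dvd {ℓ : ℕ} (hℓ : ℓ.Prime) {n : ℤ}
    (h : ∀ e : ℕ, ((ℓ : ℤ) ^ e) ∣ n) : n = 0 := by
  by_contra hn
  have h1 : (ℓ : ℤ) ^ n.natAbs ≤ |n| := by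
    simpa using Int.le_of_dvd (abs_pos.mpr hn) ((dvd_abs _ _).mpr (h n.natAbs))
  have h2 : (n.natAbs : ℤ) < (ℓ : ℤ) ^ n.natAbs := by
    exact_mod_cast (Nat.lt_pow_self hℓ.one_lt : n.natAbs < ℓ ^ n.natAbs)
  have : |n| = (n.natAbs : ℤ) := Int.abs_eq_natAbs n
  omega

/-- For an abelian group `A`, a divisible subgroup `B` with `A ⧸ B` free abelian,
and a prime `ℓ`, the kernel of the canonical map `A → lim_e A/ℓ^e A` (i.e. the set of `a`
mapping to `0` in every quotient `A ⧸ ℓ^e A`) equals `B`. -/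
theorem stmt_0 {A : Type*} [AddCommGroup A] (B : AddSubgroup A) (ℓ : ℕ) (hℓ : ℓ.Prime)
    (hdiv : ∀ b ∈ B, ∀ n : ℕ, 1 ≤ n → ∃ b' ∈ B, n • b' = b)
    (hfree : Module.Free ℤ (A ⧸ B)) (a : A) :
    (∀ e : ℕ, 1 ≤ e →
      QuotientAddGroup.mk' ((zsmulAddGroupHom ((ℓ : ℤ) ^ e)).range) a = 0) ↔ a ∈ B := by
  constructor
  · intro h
    set x : A ⧸ B := QuotientAddGroup.mk a with hxdef
    have hx : ∀ e : ℕ, ∃ y : A ⧸ B, (ℓ : ℤ) ^ e • y = x := by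
      intro e
      rcases Nat.eq_zero_or_pos e with he | he
      · exact ⟨x, by simp [he]⟩
      · have h0 := h e he
        rw [QuotientAddGroup.mk'_apply, QuotientAddGroup.eq_zero_iff] at h0
        obtain ⟨y, hy⟩ := h0
        refine ⟨QuotientAddGroup.mk y, ?_⟩
        have : (zsmulAddGroupHom ((ℓ : ℤ) ^ e)) y = (ℓ : ℤ) ^ e • y := rfl
        rw [this] at hy
        rw [hxdef, ← hy]
        exact (QuotientAddGroup.mk' B).map_zsmul ((ℓ : ℤ) ^ e) y |>.symm
    have hx0 : x = 0 := by
      let b := Module.Free.chooseBasis ℤ (A ⧸ B)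
      apply b.repr.injective
      rw [map_zero]
      ext i
      rw [Finsupp.coe_zero, Pi.zero_apply]
      apply int_eq_zero_of_pow_dvd hℓ
      intro e
      obtain ⟨y, hy⟩ := hx e
      refine ⟨b.repr y i, ?_⟩
      rw [← hy, map_zsmul]
      simp
    rw [hxdef] at hx0
    exact (QuotientAddGroup.eq_zero_iff a).mp hx0
  · intro ha e he
    obtain ⟨b', hb', hb'a⟩ := hdiv a ha (ℓ ^ e) (Nat.one_le_iff_ne_zero.mpr (pow_ne_zero e hℓ.pos.ne'))
    rw [QuotientAddGroup.mk'_apply, QuotientAddGroup.eq_zero_iff]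
    refine ⟨b', ?_⟩
    show (ℓ : ℤ) ^ e • b' = a
    rw [← hb'a, ← Nat.cast_pow, natCast_zsmul]
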